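/- Let χ₁ and χ₂ be completely multiplicative arithmetic functions, χ = χ₁·χ₂, and define ε(n) = Σ_{d | n} χ₁(d) χ₂(n/d). Then for all positive integers n and m, ε(nm) = Σ_{c | gcd(n,m)} μ(c) χ(c) ε(n/c) ε(m/c). -/

import Mathlib

open scoped ArithmeticFunction ArithmeticFunction.Moebius

namespace EisensteinAux

/-- geometric-type sum `S x y k = Σ_{i≤k} x^i y^{k-i}` -/
noncomputable def S (x y : ℂ) (k : ℕ) : ℂ := ∑ i ∈ Finset.range (k + 1), x ^ i * y ^ (k - i)

lemma S_zero (x y : ℂ) : S x y 0 = 1 := by simp [S]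

lemma S_succ (x y : ℂ) (k : ℕ) : S x y (k + 1) = x * S x y k + y ^ (k + 1) := by
  rw [S, Finset.sum_range_succ' (fun i => x ^ i * y ^ (k + 1 - i))]
  simp only [pow_zero, one_mul, Nat.sub_zero, S, Finset.mul_sum]
  congr 1
  refine Finset.sum_congr rfl fun i hi => ?_
  have : k + 1 - (i + 1) = k - i := by omega
  rw [this, pow_succ']
  ring

lemma S_one (x y : ℂ) : S x y 1 = x + y := by
  rw [S_succ, S_zero]; ring

lemma S_succ_succ (x y : ℂ) (a : ℕ) :
    S x y (a + 2) = S x y (a + 1) * (x + y) - x * y * S x y a := by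
  have h1 : S x y (a + 1) = x * S x y a + y ^ (a + 1) := S_succ x y a
  have h2 : S x y (a + 2) = x * S x y (a + 1) + y ^ (a + 2) := S_succ x y (a + 1)
  have : y ^ (a + 2) = y * y ^ (a + 1) := by ring
  rw [h2, this, h1]; ring

/-- key identity: `S (a+b+2) = S(a+1) S(b+1) - xy S a S b`. -/
lemma S_key (x y : ℂ) : ∀ b a : ℕ,
    S x y (a + 1 + (b + 1)) = S x y (a + 1) * S x y (b + 1) - x * y * (S x y a * S x y b) := by
  intro b
  induction b with
  | zero =>
    intro a
    have := S_succ_succ x y a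
    rw [show a + 1 + 1 = a + 2 from rfl] at *
    rw [this, S_one, S_zero]; ring
  | succ b ih =>
    intro a
    have h1 : a + 1 + (b + 1 + 1) = (a + 1) + 1 + (b + 1) := by ring
    rw [h1, ih (a + 1), S_succ_succ x y a, S_succ_succ x y b]
    ring

/-- completely multiplicative functions respect powers -/
lemma cm_pow {χ : ℕ → ℂ} (h1 : χ 1 = 1) (hm : ∀ m n : ℕ, χ (m * n) = χ m * χ n)
    (a : ℕ) : ∀ k : ℕ, χ (a ^ k) = (χ a) ^ k := by
  intro k
  induction k with
  | zero => simpa using h1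
  | succ k ih => rw [pow_succ, hm, ih, pow_succ]

/-- sum over divisors of a coprime product as a double sum -/
lemma sum_divisors_coprime_mul {M : Type*} [AddCommMonoid M] {a b : ℕ}
    (hab : Nat.Coprime a b) (f : ℕ → M) :
    ∑ d ∈ (a * b).divisors, f d = ∑ p ∈ a.divisors ×ˢ b.divisors, f (p.1 * p.2) := by
  refine Finset.sum_nbij' (i := fun d => (Nat.gcd d a, Nat.gcd d b))
    (j := fun p => p.1 * p.2) ?_ ?_ ?_ ?_ ?_
  · intro d hd
    rw [Nat.mem_divisors] at hd
    obtain ⟨hdvd, hne⟩ := hd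
    rw [Finset.mem_product, Nat.mem_divisors, Nat.mem_divisors]
    have ha : a ≠ 0 := fun h => hne (by simp [h])
    have hb : b ≠ 0 := fun h => hne (by simp [h])
    exact ⟨⟨Nat.gcd_dvd_right d a, ha⟩, ⟨Nat.gcd_dvd_right d b, hb⟩⟩
  · intro p hp
    rw [Finset.mem_product, Nat.mem_divisors, Nat.mem_divisors] at hp
    rw [Nat.mem_divisors]
    exact ⟨mul_dvd_mul hp.1.1 hp.2.1, mul_ne_zero hp.1.2 hp.2.2⟩
  · intro d hd
    rw [Nat.mem_divisors] at hd
    exact (Nat.gcd_mul_gcd_eq_iff_dvd_mul_of_coprime hab).2 hd.1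
  · intro p hp
    rw [Finset.mem_product, Nat.mem_divisors, Nat.mem_divisors] at hp
    have h1 : Nat.gcd (p.1 * p.2) a = p.1 := by
      rw [Nat.Coprime.gcd_mul_right_cancel p.1 (hab.symm.coprime_dvd_left hp.2.1)]
      exact Nat.gcd_eq_left hp.1.1
    have h2 : Nat.gcd (p.1 * p.2) b = p.2 := by
      rw [Nat.Coprime.gcd_mul_left_cancel p.2 (hab.coprime_dvd_left hp.1.1)]
      exact Nat.gcd_eq_left hp.2.1
    simp [h1, h2]
  · intro d hd
    rw [Nat.mem_divisors] at hd
    congr 1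
    exact ((Nat.gcd_mul_gcd_eq_iff_dvd_mul_of_coprime hab).2 hd.1).symm

section Eps

variable (χ₁ χ₂ : ℕ → ℂ)
    (h₁ : χ₁ 1 = 1) (h₂ : χ₂ 1 = 1)
    (hm₁ : ∀ m n : ℕ, χ₁ (m * n) = χ₁ m * χ₁ n)
    (hm₂ : ∀ m n : ℕ, χ₂ (m * n) = χ₂ m * χ₂ n)
    (ε : ℕ → ℂ) (hε : ∀ n : ℕ, ε n = ∑ d ∈ n.divisors, χ₁ d * χ₂ (n / d))

include h₁ h₂ hm₁ hm₂ hε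

lemma eps_one : ε 1 = 1 := by
  rw [hε]; simp [h₁, h₂]

/-- ε is multiplicative -/
lemma eps_mul {a b : ℕ} (hab : Nat.Coprime a b) : ε (a * b) = ε a * ε b := by
  rw [hε, hε, hε, sum_divisors_coprime_mul hab, Finset.sum_mul_sum,
    ← Finset.sum_product']
  refine Finset.sum_congr rfl fun p hp => ?_
  rw [Finset.mem_product, Nat.mem_divisors, Nat.mem_divisors] at hp
  rw [hm₁, ← Nat.div_mul_div_comm hp.1.1 hp.2.1, hm₂]
  ring

/-- ε at prime powers equals S -/
lemma eps_prime_pow {p : ℕ} (hp : p.Prime) (k : ℕ) :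
    ε (p ^ k) = S (χ₁ p) (χ₂ p) k := by
  rw [hε, Nat.sum_divisors_prime_pow hp, S]
  refine Finset.sum_congr rfl fun i hi => ?_
  rw [Finset.mem_range] at hi
  rw [Nat.pow_div (by omega) hp.pos, cm_pow h₁ hm₁, cm_pow h₂ hm₂]

end Eps

end EisensteinAux

open EisensteinAux in
/-- Multiplicativity relation for the Eisenstein coefficient
`ε(n) = Σ_{d ∣ n} χ₁(d) χ₂(n/d)`:
`ε(nm) = Σ_{c ∣ gcd(n,m)} μ(c) χ(c) ε(n/c) ε(m/c)` where `χ = χ₁·χ₂`. -/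
theorem eisenstein_coeff_mult (χ₁ χ₂ : ℕ → ℂ)
    (h₁ : χ₁ 1 = 1) (h₂ : χ₂ 1 = 1)
    (hm₁ : ∀ m n : ℕ, χ₁ (m * n) = χ₁ m * χ₁ n)
    (hm₂ : ∀ m n : ℕ, χ₂ (m * n) = χ₂ m * χ₂ n)
    (ε : ℕ → ℂ) (hε : ∀ n : ℕ, ε n = ∑ d ∈ n.divisors, χ₁ d * χ₂ (n / d))
    (n m : ℕ) (hn : 0 < n) (hm : 0 < m) :
    ε (n * m) =
      ∑ c ∈ (Nat.gcd n m).divisors,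
        (μ c : ℂ) * (χ₁ c * χ₂ c) * ε (n / c) * ε (m / c) := by
  -- abbreviation for the RHS
  set G : ℕ → ℕ → ℂ := fun n m =>
    ∑ c ∈ (Nat.gcd n m).divisors,
      (μ c : ℂ) * (χ₁ c * χ₂ c) * ε (n / c) * ε (m / c) with hG
  show ε (n * m) = G n m
  -- G is bimultiplicative
  have hGmul : ∀ n₁ m₁ n₂ m₂ : ℕ, Nat.Coprime (n₁ * m₁) (n₂ * m₂) →
      G (n₁ * n₂) (m₁ * m₂) = G n₁ m₁ * G n₂ m₂ := by
    intro n₁ m₁ n₂ m₂ hco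
    have hn₁n₂ : Nat.Coprime n₁ n₂ :=
      (hco.coprime_dvd_left (dvd_mul_right _ _)).coprime_dvd_right (dvd_mul_right _ _)
    have hn₁m₂ : Nat.Coprime n₁ m₂ :=
      (hco.coprime_dvd_left (dvd_mul_right _ _)).coprime_dvd_right (dvd_mul_left _ _)
    have hm₁n₂ : Nat.Coprime m₁ n₂ :=
      (hco.coprime_dvd_left (dvd_mul_left _ _)).coprime_dvd_right (dvd_mul_right _ _)
    have hm₁m₂ : Nat.Coprime m₁ m₂ :=
      (hco.coprime_dvd_left (dvd_mul_left _ _)).coprime_dvd_right (dvd_mul_left _ _)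
    have hgcd : Nat.gcd (n₁ * n₂) (m₁ * m₂) = Nat.gcd n₁ m₁ * Nat.gcd n₂ m₂ := by
      rw [Nat.Coprime.gcd_mul _ hm₁m₂, Nat.Coprime.gcd_mul_right_cancel n₁ hm₁n₂.symm,
        Nat.Coprime.gcd_mul_left_cancel n₂ hn₁m₂]
    have hgco : Nat.Coprime (Nat.gcd n₁ m₁) (Nat.gcd n₂ m₂) :=
      (hn₁n₂.coprime_dvd_left (Nat.gcd_dvd_left _ _)).coprime_dvd_right (Nat.gcd_dvd_left _ _)
    rw [hG]
    simp only
    rw [hgcd, sum_divisors_coprime_mul hgco, Finset.sum_mul_sum, ← Finset.sum_product']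
    refine Finset.sum_congr rfl fun c hc => ?_
    rw [Finset.mem_product, Nat.mem_divisors, Nat.mem_divisors] at hc
    obtain ⟨⟨hc1, _⟩, ⟨hc2, _⟩⟩ := hc
    have hc1n : c.1 ∣ n₁ := hc1.trans (Nat.gcd_dvd_left _ _)
    have hc1m : c.1 ∣ m₁ := hc1.trans (Nat.gcd_dvd_right _ _)
    have hc2n : c.2 ∣ n₂ := hc2.trans (Nat.gcd_dvd_left _ _)
    have hc2m : c.2 ∣ m₂ := hc2.trans (Nat.gcd_dvd_right _ _)
    have hcc : Nat.Coprime c.1 c.2 := (hn₁n₂.coprime_dvd_left hc1n).coprime_dvd_right hc2n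
    have hmu : (μ (c.1 * c.2) : ℂ) = (μ c.1 : ℂ) * (μ c.2 : ℂ) := by
      rw_mod_cast [ArithmeticFunction.isMultiplicative_moebius.map_mul_of_coprime hcc]
    rw [← Nat.div_mul_div_comm hc1n hc2n, ← Nat.div_mul_div_comm hc1m hc2m,
      eps_mul χ₁ χ₂ h₁ h₂ hm₁ hm₂ ε hε
        ((hn₁n₂.coprime_dvd_left (Nat.div_dvd_of_dvd hc1n)).coprime_dvd_right
          (Nat.div_dvd_of_dvd hc2n)),
      eps_mul χ₁ χ₂ h₁ h₂ hm₁ hm₂ ε hε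
        ((hm₁m₂.coprime_dvd_left (Nat.div_dvd_of_dvd hc1m)).coprime_dvd_right
          (Nat.div_dvd_of_dvd hc2m)),
      hmu, hm₁, hm₂]
    ring
  -- prime power case
  have hprime : ∀ p : ℕ, p.Prime → ∀ α β : ℕ, ε (p ^ (α + β)) = G (p ^ α) (p ^ β) := by
    intro p hp α β
    rcases Nat.eq_zero_or_pos (min α β) with hmin | hmin
    · -- one of α, β is zero
      have hg : Nat.gcd (p ^ α) (p ^ β) = 1 := by
        rcases Nat.min_eq_zero_iff.mp hmin with h | h <;> subst h <;> simp [Nat.gcd_comm]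
      rw [hG]; simp only [hg]
      rw [Nat.divisors_one, Finset.sum_singleton]
      simp only [Nat.div_one, ArithmeticFunction.moebius_apply_one, h₁, h₂]
      push_cast
      rcases Nat.min_eq_zero_iff.mp hmin with h | h <;> subst h <;>
        simp [eps_one χ₁ χ₂ h₁ h₂ hm₁ hm₂ ε hε] <;> ring
    · -- both positive
      obtain ⟨a, rfl⟩ : ∃ a, α = a + 1 := ⟨α - 1, by omega⟩
      obtain ⟨b, rfl⟩ : ∃ b, β = b + 1 := ⟨β - 1, by omega⟩
      have hg : Nat.gcd (p ^ (a+1)) (p ^ (b+1)) = p ^ (min (a+1) (b+1)) := by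
        rcases le_total (a+1) (b+1) with h | h
        · rw [Nat.gcd_eq_left (pow_dvd_pow p h), min_eq_left h]
        · rw [Nat.gcd_eq_right (pow_dvd_pow p h), min_eq_right h]
      obtain ⟨t, ht⟩ : ∃ t, min (a+1) (b+1) = t + 1 := ⟨min (a+1) (b+1) - 1, by omega⟩
      rw [hG]; simp only [hg, ht]
      rw [Nat.sum_divisors_prime_pow hp, Finset.sum_range_succ', Finset.sum_range_succ']
      have hzero : ∀ i ∈ Finset.range t,
          (μ (p ^ (i + 1 + 1)) : ℂ) * (χ₁ (p ^ (i+1+1)) * χ₂ (p ^ (i+1+1))) *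
            ε (p ^ (a+1) / p ^ (i+1+1)) * ε (p ^ (b+1) / p ^ (i+1+1)) = 0 := by
        intro i _
        rw [ArithmeticFunction.moebius_apply_prime_pow hp (by omega), if_neg (by omega)]
        simp
      rw [Finset.sum_congr rfl hzero, Finset.sum_const_zero, zero_add]
      rw [pow_zero, pow_one, Nat.div_one, Nat.div_one,
        ArithmeticFunction.moebius_apply_one,
        ArithmeticFunction.moebius_apply_prime hp]
      have hdiva : p ^ (a + 1) / p = p ^ a := by
        rw [pow_succ, Nat.mul_div_cancel _ hp.pos]
      have hdivb : p ^ (b + 1) / p = p ^ b := by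
        rw [pow_succ, Nat.mul_div_cancel _ hp.pos]
      simp only [hdiva, hdivb, h₁, h₂, ← pow_succ',
        eps_prime_pow χ₁ χ₂ h₁ h₂ hm₁ hm₂ ε hε hp, Nat.one_add,
        S_key (χ₁ p) (χ₂ p) b a]
      push_cast
      ring
  -- strong induction on n * m
  suffices H : ∀ k : ℕ, ∀ n m : ℕ, n * m ≤ k → 0 < n → 0 < m → ε (n * m) = G n m by
    exact H (n * m) n m le_rfl hn hm
  clear hn hm n m
  intro k
  induction k using Nat.strong_induction_on with
  | _ k ih =>
    intro n m hk hn hm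
    rcases eq_or_ne (n * m) 1 with h1 | h1
    · have hn1 : n = 1 := Nat.eq_one_of_mul_eq_one_right (by rwa [mul_comm] at h1)
      have hm1 : m = 1 := Nat.eq_one_of_mul_eq_one_left h1
      subst hn1; subst hm1
      rw [hG]
      simp [eps_one χ₁ χ₂ h₁ h₂ hm₁ hm₂ ε hε, h₁, h₂]
    · obtain ⟨p, hp, hpdvd⟩ := Nat.exists_prime_and_dvd h1
      set α := n.factorization p with hα
      set β := m.factorization p with hβ
      set n' := n / p ^ α with hn'
      set m' := m / p ^ β with hm'
      have hnfact : p ^ α * n' = n := Nat.ordProj_mul_ordCompl_eq_self n p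
      have hmfact : p ^ β * m' = m := Nat.ordProj_mul_ordCompl_eq_self m p
      have hpn' : ¬ p ∣ n' := Nat.not_dvd_ordCompl hp hn.ne'
      have hpm' : ¬ p ∣ m' := Nat.not_dvd_ordCompl hp hm.ne'
      have hn'pos : 0 < n' := Nat.ordCompl_pos p hn.ne'
      have hm'pos : 0 < m' := Nat.ordCompl_pos p hm.ne'
      have hαβ : 1 ≤ α + β := by
        rcases (Nat.Prime.dvd_mul hp).mp hpdvd with h | h
        · have : 1 ≤ α := (Nat.Prime.factorization_pos_of_dvd hp hn.ne' h)
          omega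
        · have : 1 ≤ β := (Nat.Prime.factorization_pos_of_dvd hp hm.ne' h)
          omega
      have hco : Nat.Coprime (p ^ α * p ^ β) (n' * m') := by
        rw [← pow_add]
        refine Nat.Coprime.pow_left _ ?_
        rw [Nat.Prime.coprime_iff_not_dvd hp, Nat.Prime.dvd_mul hp]
        tauto
      have key : n * m = (p ^ α * p ^ β) * (n' * m') := by
        rw [← hnfact, ← hmfact]; ring
      have hlt : n' * m' < n * m := by
        rw [key, ← pow_add]
        have h2 : 2 ≤ p := hp.two_le
        have hppos : 1 < p ^ (α + β) := by
          calc 1 < p := hp.one_lt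
          _ ≤ p ^ (α + β) := Nat.le_self_pow (by omega) p
        calc n' * m' = 1 * (n' * m') := (one_mul _).symm
        _ < p ^ (α + β) * (n' * m') := by
            exact (Nat.mul_lt_mul_right (Nat.mul_pos hn'pos hm'pos)).mpr hppos
      have hIH : ε (n' * m') = G n' m' := ih (n' * m') (by omega) n' m' le_rfl hn'pos hm'pos
      calc ε (n * m) = ε ((p ^ α * p ^ β) * (n' * m')) := by rw [← key]
      _ = ε (p ^ α * p ^ β) * ε (n' * m') := eps_mul χ₁ χ₂ h₁ h₂ hm₁ hm₂ ε hε hco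
      _ = ε (p ^ (α + β)) * ε (n' * m') := by rw [pow_add]
      _ = G (p ^ α) (p ^ β) * G n' m' := by rw [hprime p hp α β, hIH]
      _ = G (p ^ α * n') (p ^ β * m') := (hGmul _ _ _ _ hco).symm
      _ = G n m := by rw [hnfact, hmfact]
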